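/- Let G be a finite simple graph on n vertices with m edges and with minimum degree at least 1. Then λ(G) ≤ sqrt(2m − n + 1) (Hong's inequality; it follows from the bound λ(G) ≤ sqrt(λ(G − v)² + 2·d(v) − 1) by deleting vertices). -/

import Mathlib

open Matrix

/-- The adjacency matrix of a simple graph, viewed over `ℝ`, is Hermitian. -/
lemma adjHerm {V : Type*} [Fintype V] (G : SimpleGraph V) [DecidableRel G.Adj] :
    (G.adjMatrix ℝ).IsHermitian := by
  rw [Matrix.IsHermitian, Matrix.conjTranspose_eq_transpose_of_trivial]
  exact G.isSymm_adjMatrix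

/-- The spectral radius of a finite simple graph: the maximum of the absolute
values of the eigenvalues of its adjacency matrix. -/
noncomputable def specRad {V : Type*} [Fintype V] [DecidableEq V]
    (G : SimpleGraph V) [DecidableRel G.Adj] : ℝ :=
  ⨆ i, |(adjHerm G).eigenvalues i|

instance {V : Type*} (G : SimpleGraph V) [DecidableRel G.Adj] (s : Set V)
    [DecidablePred (· ∈ s)] : DecidableRel (G.induce s).Adj :=
  fun a b => ‹DecidableRel G.Adj› a b

/-- The graph `G - v` obtained from `G` by deleting the vertex `v`
and all edges incident to it. -/
abbrev deleteVertex {V : Type*} [DecidableEq V] (G : SimpleGraph V) (v : V) :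
    SimpleGraph {u // u ≠ v} :=
  G.induce {u | u ≠ v}

open Finset in
/-- Combinatorial key: the sum of degrees over the neighborhood of a vertex is at
most `2m - n + 1` when the minimum degree is at least one. -/
lemma hong_deg_sum {V : Type*} [Fintype V] [DecidableEq V]
    (G : SimpleGraph V) [DecidableRel G.Adj] (hδ : ∀ v, 1 ≤ G.degree v) (w : V) :
    ∑ p ∈ G.neighborFinset w, G.degree p + Fintype.card V ≤ 2 * G.edgeFinset.card + 1 := by
  have h2m : ∑ v, G.degree v = 2 * G.edgeFinset.card := G.sum_degrees_eq_twice_card_edges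
  have hsplit : ∑ p ∈ G.neighborFinset w, G.degree p
      + ∑ p ∈ (G.neighborFinset w)ᶜ, G.degree p = ∑ v, G.degree v :=
    Finset.sum_add_sum_compl _ _
  have hwmem : w ∈ (G.neighborFinset w)ᶜ := by simp
  have herase : G.degree w + ∑ p ∈ ((G.neighborFinset w)ᶜ).erase w, G.degree p
      = ∑ p ∈ (G.neighborFinset w)ᶜ, G.degree p := by
    exact Finset.add_sum_erase _ (fun p => G.degree p) hwmem
  have hge : (((G.neighborFinset w)ᶜ).erase w).card
      ≤ ∑ p ∈ ((G.neighborFinset w)ᶜ).erase w, G.degree p := by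
    calc _ = ∑ _p ∈ ((G.neighborFinset w)ᶜ).erase w, 1 := by simp
    _ ≤ _ := Finset.sum_le_sum fun p _ => hδ p
  have hcard : ((G.neighborFinset w)ᶜ).card = Fintype.card V - G.degree w := by
    rw [Finset.card_compl, G.card_neighborFinset_eq_degree]
  have hcarde : (((G.neighborFinset w)ᶜ).erase w).card = ((G.neighborFinset w)ᶜ).card - 1 :=
    Finset.card_erase_of_mem hwmem
  have hdlt : G.degree w < Fintype.card V := G.degree_lt_card_verts w
  omega

open Finset in
/-- Each eigenvalue squared is at most `2m - n + 1`. -/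
lemma hong_eig_sq {V : Type*} [Fintype V] [DecidableEq V]
    (G : SimpleGraph V) [DecidableRel G.Adj] (hδ : ∀ v, 1 ≤ G.degree v) (i : V) :
    ((adjHerm G).eigenvalues i) ^ 2 ≤ 2 * (G.edgeFinset.card : ℝ) - (Fintype.card V : ℝ) + 1 := by
  have key : ∀ w : V, (∑ p ∈ G.neighborFinset w, (G.degree p : ℝ))
      ≤ 2 * (G.edgeFinset.card : ℝ) - (Fintype.card V : ℝ) + 1 := by
    intro w
    have := hong_deg_sum G hδ w
    have hcast : (∑ p ∈ G.neighborFinset w, (G.degree p : ℝ))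
        = ((∑ p ∈ G.neighborFinset w, G.degree p : ℕ) : ℝ) := by push_cast; ring
    rw [hcast]
    have : ((∑ p ∈ G.neighborFinset w, G.degree p : ℕ) : ℝ) + (Fintype.card V : ℝ)
        ≤ 2 * (G.edgeFinset.card : ℝ) + 1 := by exact_mod_cast this
    linarith
  set M := G.adjMatrix ℝ with hM
  set μ := (adjHerm G).eigenvalues i with hμ
  set x : V → ℝ := ⇑((adjHerm G).eigenvectorBasis i) with hx
  have hev : M *ᵥ x = μ • x := (adjHerm G).mulVec_eigenvectorBasis i
  have hev2 : M *ᵥ (M *ᵥ x) = (μ ^ 2) • x := by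
    rw [hev, mulVec_smul, hev, smul_smul, ← sq]
  have : Nonempty V := ⟨i⟩
  obtain ⟨w, -, hw⟩ := Finset.exists_max_image Finset.univ (fun v => |x v|) univ_nonempty
  simp only [mem_univ, forall_true_left] at hw
  have hxne : x ≠ 0 := by
    intro h; apply (adjHerm G).eigenvectorBasis.orthonormal.ne_zero i; ext j; exact congrFun h j
  have hxw : 0 < |x w| := by
    obtain ⟨u, hu⟩ := Function.ne_iff.mp hxne
    exact lt_of_lt_of_le (abs_pos.mpr hu) (hw u)
  have hMnn : ∀ a b : V, 0 ≤ M a b := by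
    intro a b; rw [hM, SimpleGraph.adjMatrix_apply]; positivity
  have hrow : ∀ p : V, ∑ u, M p u = (G.degree p : ℝ) := by
    intro p
    simp [hM, SimpleGraph.adjMatrix_apply, SimpleGraph.degree, SimpleGraph.neighborFinset,
      SimpleGraph.neighborSet, Finset.sum_boole, Finset.filter_filter]
    congr 1; ext y; simp only [Finset.mem_filter, Finset.mem_univ, true_and]; classical
    convert (Set.mem_toFinset (s := {w | G.Adj p w}) (a := y)).symm
    · exact Iff.rfl
    · exact Set.toFinset_congr rfl
  have h1 : ∀ p, |(M *ᵥ x) p| ≤ (G.degree p : ℝ) * |x w| := by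
    intro p
    calc |(M *ᵥ x) p| = |∑ u, M p u * x u| := by rfl
      _ ≤ ∑ u, |M p u * x u| := Finset.abs_sum_le_sum_abs _ _
      _ = ∑ u, M p u * |x u| := by
          refine Finset.sum_congr rfl fun u _ => ?_
          rw [abs_mul, abs_of_nonneg (hMnn p u)]
      _ ≤ ∑ u, M p u * |x w| :=
          Finset.sum_le_sum fun u _ => mul_le_mul_of_nonneg_left (hw u) (hMnn p u)
      _ = (∑ u, M p u) * |x w| := by rw [Finset.sum_mul]
      _ = (G.degree p : ℝ) * |x w| := by rw [hrow p]
  have h2 : μ ^ 2 * |x w| ≤ (∑ p ∈ G.neighborFinset w, (G.degree p : ℝ)) * |x w| := by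
    calc μ ^ 2 * |x w| = |μ ^ 2 * x w| := by
          rw [abs_mul, abs_of_nonneg (sq_nonneg μ)]
      _ = |(M *ᵥ (M *ᵥ x)) w| := by rw [hev2]; rfl
      _ = |∑ p, M w p * (M *ᵥ x) p| := by rfl
      _ ≤ ∑ p, |M w p * (M *ᵥ x) p| := Finset.abs_sum_le_sum_abs _ _
      _ = ∑ p, M w p * |(M *ᵥ x) p| := by
          refine Finset.sum_congr rfl fun p _ => ?_
          rw [abs_mul, abs_of_nonneg (hMnn w p)]
      _ ≤ ∑ p, M w p * ((G.degree p : ℝ) * |x w|) :=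
          Finset.sum_le_sum fun p _ => mul_le_mul_of_nonneg_left (h1 p) (hMnn w p)
      _ = (∑ p, M w p * (G.degree p : ℝ)) * |x w| := by
          rw [Finset.sum_mul]; exact Finset.sum_congr rfl fun p _ => by ring
      _ = (∑ p ∈ G.neighborFinset w, (G.degree p : ℝ)) * |x w| := by
          congr 1
          rw [SimpleGraph.neighborFinset_eq_filter, Finset.sum_filter]
          refine Finset.sum_congr rfl fun p _ => ?_
          rw [hM, SimpleGraph.adjMatrix_apply]
          split <;> simp
  exact le_of_mul_le_mul_right (h2.trans (mul_le_mul_of_nonneg_right (key w) hxw.le)) hxw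

/-- **Hong's inequality.** If `G` has `n` vertices, `m` edges, and minimum degree at
least `1`, then `λ(G) ≤ sqrt(2m - n + 1)`. -/
theorem hong_inequality {V : Type*} [Fintype V] [DecidableEq V]
    (G : SimpleGraph V) [DecidableRel G.Adj] (hδ : ∀ v, 1 ≤ G.degree v) :
    specRad G ≤
      Real.sqrt (2 * (G.edgeFinset.card : ℝ) - (Fintype.card V : ℝ) + 1) := by
  refine Real.iSup_le (fun i => ?_) (Real.sqrt_nonneg _)
  exact Real.abs_le_sqrt (hong_eig_sq G hδ i)
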